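/- Let X be a Banach lattice and Y a Banach sequence lattice. Then ℓ₀^{τ,Y}(X), the closure of the eventually zero sequences in ℓ^{τ,Y}(X), is an ideal, and hence a closed sublattice, of ℓ^{τ,Y}(X); in particular ℓ₀^{τ,Y}(X) is itself a Banach lattice. -/

import Mathlib

open Filter Topology

/-- A Banach sequence lattice: a Banach function space over `ℕ` with counting measure,
an ideal of sequences with an order-preserving (monotone) complete norm, containing all
canonical unit vectors. -/
structure BanachSeqLattice where
  Mem : (ℕ → ℝ) → Prop
  nrm : (ℕ → ℝ) → ℝ
  zero_mem : Mem 0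
  add_mem : ∀ {f g : ℕ → ℝ}, Mem f → Mem g → Mem (f + g)
  smul_mem : ∀ (c : ℝ) {f : ℕ → ℝ}, Mem f → Mem (c • f)
  ideal : ∀ {f g : ℕ → ℝ}, (∀ n, |f n| ≤ |g n|) → Mem g → Mem f
  nrm_mono : ∀ {f g : ℕ → ℝ}, Mem g → (∀ n, |f n| ≤ |g n|) → nrm f ≤ nrm g
  nrm_nonneg : ∀ f : ℕ → ℝ, 0 ≤ nrm f
  nrm_eq_zero_iff : ∀ {f : ℕ → ℝ}, Mem f → (nrm f = 0 ↔ f = 0)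
  nrm_add_le : ∀ {f g : ℕ → ℝ}, Mem f → Mem g → nrm (f + g) ≤ nrm f + nrm g
  nrm_smul : ∀ (c : ℝ) (f : ℕ → ℝ), nrm (c • f) = |c| * nrm f
  unit_mem : ∀ n : ℕ, Mem (fun k => if k = n then 1 else 0)
  complete : ∀ u : ℕ → (ℕ → ℝ), (∀ m, Mem (u m)) →
    (∀ ε : ℝ, 0 < ε → ∃ N, ∀ m, N ≤ m → ∀ k, N ≤ k → nrm (u m - u k) < ε) →
    ∃ f, Mem f ∧ Filter.Tendsto (fun m => nrm (u m - f)) Filter.atTop (nhds 0)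

/-- Continuous positively 1-homogeneous functions on `ℝⁿ` (the space `𝓗_n`). -/
def Hom1 (n : ℕ) (h : (Fin n → ℝ) → ℝ) : Prop :=
  Continuous h ∧ ∀ c : ℝ, 0 ≤ c → ∀ t, h (c • t) = c * h t

/-- Extension of a finite vector to a sequence, by zero. -/
def finSeq (n : ℕ) (t : Fin n → ℝ) : ℕ → ℝ :=
  fun k => if hk : k < n then t ⟨k, hk⟩ else 0

/-- The element `‖(x₁,...,x_n)‖_Y ∈ X` given by Krivine's functional calculus `τ`. -/
noncomputable def vY (Y : BanachSeqLattice) {X : Type*} [NormedAddCommGroup X] [Lattice X] [HasSolidNorm X] [IsOrderedAddMonoid X]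
    (τ : ∀ n : ℕ, (Fin n → X) → ((Fin n → ℝ) → ℝ) → X)
    (n : ℕ) (x : Fin n → X) : X :=
  τ n x (fun t => Y.nrm (finSeq n t))

/-- The norm of the space `ℓ^{τ,Y}(X)`: `sup_n ‖ ‖(x₁,...,x_n)‖_Y ‖_X`. -/
noncomputable def Tnrm (Y : BanachSeqLattice) {X : Type*} [NormedAddCommGroup X] [Lattice X] [HasSolidNorm X] [IsOrderedAddMonoid X]
    (τ : ∀ n : ℕ, (Fin n → X) → ((Fin n → ℝ) → ℝ) → X) (x : ℕ → X) : ℝ :=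
  ⨆ n : ℕ, ‖vY Y τ n (fun j : Fin n => x (j : ℕ))‖

/-- Membership in `ℓ^{τ,Y}(X)`. -/
def Tmem (Y : BanachSeqLattice) {X : Type*} [NormedAddCommGroup X] [Lattice X] [HasSolidNorm X] [IsOrderedAddMonoid X]
    (τ : ∀ n : ℕ, (Fin n → X) → ((Fin n → ℝ) → ℝ) → X) (x : ℕ → X) : Prop :=
  BddAbove (Set.range fun n : ℕ => ‖vY Y τ n (fun j : Fin n => x (j : ℕ))‖)

/-- Membership in `ℓ₀^{τ,Y}(X)`, the closure of the eventually zero sequences. -/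
def T0mem (Y : BanachSeqLattice) {X : Type*} [NormedAddCommGroup X] [Lattice X] [HasSolidNorm X] [IsOrderedAddMonoid X]
    (τ : ∀ n : ℕ, (Fin n → X) → ((Fin n → ℝ) → ℝ) → X) (x : ℕ → X) : Prop :=
  Tmem Y τ x ∧ ∀ ε : ℝ, 0 < ε → ∃ v : ℕ → X,
    (∃ N, ∀ j, N ≤ j → v j = 0) ∧ Tnrm Y τ (x - v) < ε


section LatticeAux
variable {X : Type*} [NormedAddCommGroup X] [Lattice X] [HasSolidNorm X] [IsOrderedAddMonoid X] [NormedSpace ℝ X]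

lemma aux_inf_add_le {a b c : X} (ha : 0 ≤ a) (hb : 0 ≤ b) (hc : 0 ≤ c) :
    a ⊓ (b + c) ≤ (a ⊓ b) + (a ⊓ c) := by
  have h1 : a ⊓ (b + c) - c ≤ a ⊓ b := by
    refine le_inf ?_ ?_
    · exact le_trans (sub_le_sub_right inf_le_left c) (sub_le_self a hc)
    · exact sub_le_iff_le_add.2 inf_le_right
  have h2 : a ⊓ (b + c) - (a ⊓ b) ≤ a ⊓ c := by
    refine le_inf ?_ ?_
    · exact le_trans (sub_le_self _ (le_inf ha hb)) inf_le_left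
    · rw [sub_le_iff_le_add]
      exact le_trans (sub_le_iff_le_add.1 h1) (le_of_eq (add_comm _ _))
  exact le_trans (sub_le_iff_le_add.1 h2) (le_of_eq (add_comm _ _))

lemma aux_disj_nsmul {a b : X} (ha : 0 ≤ a) (hb : 0 ≤ b) (hab : a ⊓ b = 0) (m : ℕ) :
    a ⊓ (m • b) = 0 := by
  induction m with
  | zero => simpa using inf_eq_right.2 ha
  | succ k ih =>
    have h0 : (0:X) ≤ a ⊓ (k • b + b) := le_inf ha (add_nonneg (nsmul_nonneg hb k) hb)
    have h1 := aux_inf_add_le ha (nsmul_nonneg hb k) hb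
    rw [succ_nsmul]
    exact le_antisymm (by simpa [ih, hab] using h1) h0

lemma aux_nsmul_nonneg {b : X} {m : ℕ} (hm : 1 ≤ m) (h : 0 ≤ m • b) : 0 ≤ b := by
  have hd : b⁻ ⊓ (m • b⁺) = 0 :=
    aux_disj_nsmul (negPart_nonneg b) (posPart_nonneg b)
      (by rw [inf_comm]; exact posPart_inf_negPart_eq_zero b) m
  have h1 : b⁻ ≤ m • b⁻ := by
    obtain ⟨k, rfl⟩ := Nat.exists_eq_add_of_le hm
    rw [add_comm, succ_nsmul]
    exact le_add_of_nonneg_left (nsmul_nonneg (negPart_nonneg b) k)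
  have h2 : m • b⁻ ≤ m • b⁺ := by
    have hs : m • b⁺ - m • b⁻ = m • b := by rw [← smul_sub, posPart_sub_negPart]
    have := sub_nonneg.2 (le_of_eq hs.symm)
    rw [sub_nonneg] at *
    calc m • b⁻ = m • b⁺ - m • b := by rw [← smul_sub]; rw [show b⁺ - b = b⁻ by
            rw [sub_eq_iff_eq_add, ← sub_eq_iff_eq_add', posPart_sub_negPart]]
      _ ≤ m • b⁺ := sub_le_self _ h
  have hneg : b⁻ = 0 := le_antisymm (by rw [← hd]; exact le_inf le_rfl (h1.trans h2))
    (negPart_nonneg b)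
  have := posPart_sub_negPart b
  rw [hneg, sub_zero] at this
  rw [← this]; exact posPart_nonneg b

lemma aux_rat_smul_nonneg (q : ℚ) {a : X} (hq : 0 ≤ q) (ha : 0 ≤ a) : 0 ≤ (q:ℝ) • a := by
  refine aux_nsmul_nonneg (m := q.den) q.den_pos ?_
  rw [← Nat.cast_smul_eq_nsmul ℝ, smul_smul]
  have h1 : ((q * (q.den : ℚ) : ℚ) : ℝ) = ((q.num : ℚ) : ℝ) := by
    rw [Rat.mul_den_eq_num]
  push_cast at h1
  have hnum : ((q.den : ℝ) * (q:ℝ)) = ((q.num.toNat : ℕ) : ℝ) := by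
    rw [mul_comm, h1]
    exact_mod_cast (Int.toNat_of_nonneg (Rat.num_nonneg.2 hq)).symm
  rw [hnum, Nat.cast_smul_eq_nsmul]
  exact nsmul_nonneg ha _

lemma aux_smul_nonneg {c : ℝ} {a : X} (hc : 0 ≤ c) (ha : 0 ≤ a) : 0 ≤ c • a := by
  have hex : ∀ k : ℕ, ∃ q : ℚ, c < q ∧ (q:ℝ) < c + 1/(k+1) :=
    fun k => exists_rat_btwn (lt_add_of_pos_right c (by positivity))
  choose q hq1 hq2 using hex
  have hconv : Tendsto (fun k => ((q k : ℝ))) atTop (nhds c) := by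
    have h0 : Tendsto (fun k : ℕ => c + 1/(k+1) : ℕ → ℝ) atTop (nhds (c + 0)) :=
      tendsto_const_nhds.add tendsto_one_div_add_atTop_nhds_zero_nat
    rw [add_zero] at h0
    exact tendsto_of_tendsto_of_tendsto_of_le_of_le tendsto_const_nhds h0
      (fun k => (hq1 k).le) (fun k => (hq2 k).le)
  have hterm : ∀ k, 0 ≤ ((q k : ℝ)) • a := fun k =>
    aux_rat_smul_nonneg (q k) (by exact_mod_cast (hc.trans_lt (hq1 k)).le) ha
  have hlim : Tendsto (fun k => ((q k : ℝ)) • a) atTop (nhds (c • a)) :=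
    hconv.smul_const a
  exact ge_of_tendsto hlim (Eventually.of_forall hterm)

lemma aux_smul_le_smul {c : ℝ} (hc : 0 ≤ c) {a b : X} (h : a ≤ b) : c • a ≤ c • b := by
  have h2 := aux_smul_nonneg hc (sub_nonneg.2 h)
  rw [smul_sub, sub_nonneg] at h2
  exact h2

lemma aux_smul_posPart {c : ℝ} (hc : 0 ≤ c) (a : X) : c • a⁺ = (c • a)⁺ := by
  have key : ∀ (d : ℝ), 0 ≤ d → ∀ (y : X), (d • y)⁺ ≤ d • y⁺ := by
    intro d hd y
    rw [posPart_def]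
    exact sup_le (aux_smul_le_smul hd (le_posPart y))
      (aux_smul_nonneg hd (posPart_nonneg y))
  rcases eq_or_lt_of_le hc with rfl | hc'
  · simp
  · refine le_antisymm ?_ (key c hc a)
    have hk := key c⁻¹ (by positivity) (c • a)
    calc c • a⁺ = c • ((c⁻¹ • (c • a))⁺) := by
          rw [smul_smul, inv_mul_cancel₀ hc'.ne', one_smul]
      _ ≤ c • (c⁻¹ • (c • a)⁺) := aux_smul_le_smul hc hk
      _ = (c • a)⁺ := by rw [smul_smul, mul_inv_cancel₀ hc'.ne', one_smul]

lemma aux_abs_smul (c : ℝ) (a : X) : |c • a| = |c| • |a| := by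
  have hnn : ∀ (d : ℝ), 0 ≤ d → ∀ (y : X), |d • y| = d • |y| := by
    intro d hd y
    rw [← posPart_add_negPart (d • y), ← posPart_add_negPart y, smul_add,
      aux_smul_posPart hd]
    congr 1
    rw [negPart_def, ← smul_neg, ← posPart_def, ← aux_smul_posPart hd, posPart_neg]
  rcases le_or_gt 0 c with hc | hc
  · rw [abs_of_nonneg hc]; exact hnn c hc a
  · rw [abs_of_neg hc, show c • a = (-c) • (-a) by rw [neg_smul_neg],
      hnn (-c) (by linarith) (-a), abs_neg]

lemma aux_smul_le_abs (c : ℝ) (a : X) : c • a ≤ |c| • |a| :=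
  (le_abs_self _).trans (aux_abs_smul c a).le

lemma aux_le_of_forall_eps {a b w : X} (h : ∀ ε : ℝ, 0 < ε → b ≤ a + ε • w) : b ≤ a := by
  have h0 : Tendsto (fun k : ℕ => (1/(k+1):ℝ)) atTop (nhds 0) :=
    tendsto_one_div_add_atTop_nhds_zero_nat
  have hseq : Tendsto (fun k : ℕ => a + (1/(k+1) : ℝ) • w) atTop (nhds a) := by
    simpa using (h0.smul_const w).const_add a
  exact le_of_tendsto_of_tendsto' tendsto_const_nhds hseq (fun k => h _ (by positivity))

lemma aux_abs_sup_le (a b : X) : |a ⊔ b| ≤ |a| + |b| := by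
  have h1 : a ⊔ b ≤ |a| + |b| :=
    sup_le ((le_abs_self a).trans (le_add_of_nonneg_right (abs_nonneg b)))
      ((le_abs_self b).trans (le_add_of_nonneg_left (abs_nonneg a)))
  have h2 : -(a ⊔ b) ≤ |a| + |b| := by
    rw [neg_sup]
    exact inf_le_left.trans ((neg_le_abs a).trans (le_add_of_nonneg_right (abs_nonneg b)))
  exact abs_le'.2 ⟨h1, h2⟩

end LatticeAux
section TauAux
variable {X : Type*} [NormedAddCommGroup X] [Lattice X] [HasSolidNorm X] [IsOrderedAddMonoid X] [NormedSpace ℝ X]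

/-- The unit sequences. -/
def unitf (m : ℕ) : ℕ → ℝ := fun k => if k = m then 1 else 0

/-- The norm function of `Y` on `ℝⁿ`. -/
noncomputable def hY (Y : BanachSeqLattice) (n : ℕ) : (Fin n → ℝ) → ℝ :=
  fun t => Y.nrm (finSeq n t)

lemma vY_def (Y : BanachSeqLattice) (τ : ∀ n : ℕ, (Fin n → X) → ((Fin n → ℝ) → ℝ) → X)
    (n : ℕ) (x : Fin n → X) : vY Y τ n x = τ n x (hY Y n) := rfl

/-- Bundled hypotheses on the functional calculus. -/
structure TauCalc {X : Type*} [NormedAddCommGroup X] [Lattice X] [HasSolidNorm X] [IsOrderedAddMonoid X] [NormedSpace ℝ X]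
    (τ : ∀ n : ℕ, (Fin n → X) → ((Fin n → ℝ) → ℝ) → X) : Prop where
  add : ∀ (n : ℕ) (x : Fin n → X) (h₁ h₂ : (Fin n → ℝ) → ℝ), Hom1 n h₁ → Hom1 n h₂ →
      τ n x (h₁ + h₂) = τ n x h₁ + τ n x h₂
  smul : ∀ (n : ℕ) (x : Fin n → X) (c : ℝ) (h : (Fin n → ℝ) → ℝ), Hom1 n h →
      τ n x (c • h) = c • τ n x h
  sup : ∀ (n : ℕ) (x : Fin n → X) (h₁ h₂ : (Fin n → ℝ) → ℝ), Hom1 n h₁ → Hom1 n h₂ →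
      τ n x (h₁ ⊔ h₂) = τ n x h₁ ⊔ τ n x h₂
  proj : ∀ (n : ℕ) (x : Fin n → X) (j : Fin n), τ n x (fun t => t j) = x j

lemma hom1_zero (n : ℕ) : Hom1 n (0 : (Fin n → ℝ) → ℝ) :=
  ⟨continuous_const, fun c _ t => by simp⟩

lemma hom1_add {n : ℕ} {f g : (Fin n → ℝ) → ℝ} (hf : Hom1 n f) (hg : Hom1 n g) :
    Hom1 n (f + g) :=
  ⟨hf.1.add hg.1, fun c hc t => by
    simp only [Pi.add_apply, hf.2 c hc t, hg.2 c hc t]; ring⟩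

lemma hom1_smul {n : ℕ} (c : ℝ) {f : (Fin n → ℝ) → ℝ} (hf : Hom1 n f) :
    Hom1 n (c • f) :=
  ⟨hf.1.const_smul c, fun d hd t => by
    simp only [Pi.smul_apply, smul_eq_mul, hf.2 d hd t]; ring⟩

lemma hom1_sup {n : ℕ} {f g : (Fin n → ℝ) → ℝ} (hf : Hom1 n f) (hg : Hom1 n g) :
    Hom1 n (f ⊔ g) :=
  ⟨hf.1.sup hg.1, fun c hc t => by
    simp only [Pi.sup_apply, hf.2 c hc t, hg.2 c hc t]
    exact (mul_max_of_nonneg _ _ hc).symm⟩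

lemma hom1_proj (n : ℕ) (j : Fin n) : Hom1 n (fun t => t j) :=
  ⟨continuous_apply j, fun c _ t => by simp⟩

lemma hom1_single (n : ℕ) (c : ℝ) (j : Fin n) : Hom1 n (fun t => c * t j) :=
  ⟨continuous_const.mul (continuous_apply j), fun d hd t => by
    simp only [Pi.smul_apply, smul_eq_mul]; ring⟩

lemma hom1_single_abs (n : ℕ) (c : ℝ) (j : Fin n) : Hom1 n (fun t => |c * t j|) :=
  ⟨(continuous_const.mul (continuous_apply j)).abs, fun d hd t => by
    simp only [Pi.smul_apply, smul_eq_mul]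
    rw [show c * (d * t j) = d * (c * t j) by ring, abs_mul, abs_of_nonneg hd]⟩

variable {τ : ∀ n : ℕ, (Fin n → X) → ((Fin n → ℝ) → ℝ) → X}

lemma tau_zero (H : TauCalc τ) (n : ℕ) (x : Fin n → X) : τ n x 0 = 0 := by
  have := H.smul n x 0 0 (hom1_zero n)
  simpa using this

lemma tau_mono (H : TauCalc τ) {n : ℕ} (x : Fin n → X) {f g : (Fin n → ℝ) → ℝ}
    (hf : Hom1 n f) (hg : Hom1 n g) (h : ∀ t, f t ≤ g t) : τ n x f ≤ τ n x g := by
  have hfg : f ⊔ g = g := by funext t; exact sup_eq_right.2 (h t)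
  calc τ n x f ≤ τ n x f ⊔ τ n x g := le_sup_left
    _ = τ n x (f ⊔ g) := (H.sup n x f g hf hg).symm
    _ = τ n x g := by rw [hfg]

lemma tau_nonneg (H : TauCalc τ) {n : ℕ} (x : Fin n → X) {f : (Fin n → ℝ) → ℝ}
    (hf : Hom1 n f) (h : ∀ t, 0 ≤ f t) : 0 ≤ τ n x f := by
  rw [← tau_zero H n x]
  exact tau_mono H x (hom1_zero n) hf h

/-- Linear functions on `ℝⁿ`. -/
def lin (n : ℕ) (a : Fin n → ℝ) : (Fin n → ℝ) → ℝ := fun t => ∑ j, a j * t j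

noncomputable def linX (n : ℕ) (a : Fin n → ℝ) (x : Fin n → X) : X := ∑ j, a j • x j

def asum (n : ℕ) (a : Fin n → ℝ) : (Fin n → ℝ) → ℝ := fun t => ∑ j, |a j * t j|

noncomputable def asumX (n : ℕ) (a : Fin n → ℝ) (x : Fin n → X) : X := ∑ j, |a j • x j|

lemma hom1_linS (n : ℕ) (a : Fin n → ℝ) (s : Finset (Fin n)) :
    Hom1 n (fun t => ∑ j ∈ s, a j * t j) := by
  constructor
  · exact continuous_finset_sum _ fun j _ => continuous_const.mul (continuous_apply j)
  · intro c hc t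
    rw [Finset.mul_sum]
    refine Finset.sum_congr rfl fun j _ => ?_
    simp only [Pi.smul_apply, smul_eq_mul]; ring

lemma hom1_asumS (n : ℕ) (a : Fin n → ℝ) (s : Finset (Fin n)) :
    Hom1 n (fun t => ∑ j ∈ s, |a j * t j|) := by
  constructor
  · exact continuous_finset_sum _ fun j _ => (continuous_const.mul (continuous_apply j)).abs
  · intro c hc t
    rw [Finset.mul_sum]
    refine Finset.sum_congr rfl fun j _ => ?_
    simp only [Pi.smul_apply, smul_eq_mul]
    rw [show a j * (c * t j) = c * (a j * t j) by ring, abs_mul, abs_of_nonneg hc]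

lemma hom1_lin (n : ℕ) (a : Fin n → ℝ) : Hom1 n (lin n a) := hom1_linS n a Finset.univ

lemma hom1_asum (n : ℕ) (a : Fin n → ℝ) : Hom1 n (asum n a) := hom1_asumS n a Finset.univ

lemma tau_single (H : TauCalc τ) (n : ℕ) (x : Fin n → X) (c : ℝ) (j : Fin n) :
    τ n x (fun t => c * t j) = c • x j := by
  have heq : (fun t : Fin n → ℝ => c * t j) = c • (fun t : Fin n → ℝ => t j) := by
    funext t; simp
  rw [heq, H.smul n x c _ (hom1_proj n j), H.proj n x j]

lemma tau_single_abs (H : TauCalc τ) (n : ℕ) (x : Fin n → X) (c : ℝ) (j : Fin n) :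
    τ n x (fun t => |c * t j|) = |c • x j| := by
  have heq : (fun t : Fin n → ℝ => |c * t j|)
      = (fun t => c * t j) ⊔ (fun t => -c * t j) := by
    funext t
    rw [Pi.sup_apply, abs_eq_max_neg, neg_mul]
  rw [heq, H.sup n x _ _ (hom1_single n c j) (hom1_single n (-c) j),
    tau_single H n x c j, tau_single H n x (-c) j, neg_smul]
  rfl

lemma tau_linS (H : TauCalc τ) (n : ℕ) (x : Fin n → X) (a : Fin n → ℝ)
    (s : Finset (Fin n)) :
    τ n x (fun t => ∑ j ∈ s, a j * t j) = ∑ j ∈ s, a j • x j := by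
  classical
  induction s using Finset.induction with
  | empty => simp only [Finset.sum_empty]; exact tau_zero H n x
  | @insert j s hj ih =>
    have heq : (fun t : Fin n → ℝ => ∑ j' ∈ insert j s, a j' * t j')
        = (fun t => a j * t j) + (fun t => ∑ j' ∈ s, a j' * t j') := by
      funext t; rw [Pi.add_apply, Finset.sum_insert hj]
    rw [heq, H.add n x _ _ (hom1_single n (a j) j) (hom1_linS n a s),
      Finset.sum_insert hj, ih, tau_single H n x (a j) j]

lemma tau_asumS (H : TauCalc τ) (n : ℕ) (x : Fin n → X) (a : Fin n → ℝ)
    (s : Finset (Fin n)) :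
    τ n x (fun t => ∑ j ∈ s, |a j * t j|) = ∑ j ∈ s, |a j • x j| := by
  classical
  induction s using Finset.induction with
  | empty => simp only [Finset.sum_empty]; exact tau_zero H n x
  | @insert j s hj ih =>
    have heq : (fun t : Fin n → ℝ => ∑ j' ∈ insert j s, |a j' * t j'|)
        = (fun t => |a j * t j|) + (fun t => ∑ j' ∈ s, |a j' * t j'|) := by
      funext t; rw [Pi.add_apply, Finset.sum_insert hj]
    rw [heq, H.add n x _ _ (hom1_single_abs n (a j) j) (hom1_asumS n a s),
      Finset.sum_insert hj, ih, tau_single_abs H n x (a j) j]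

lemma tau_lin (H : TauCalc τ) (n : ℕ) (x : Fin n → X) (a : Fin n → ℝ) :
    τ n x (lin n a) = linX n a x := tau_linS H n x a Finset.univ

lemma tau_asum (H : TauCalc τ) (n : ℕ) (x : Fin n → X) (a : Fin n → ℝ) :
    τ n x (asum n a) = asumX n a x := tau_asumS H n x a Finset.univ

/-- Finite suprema of linear functions. -/
def supl (n : ℕ) (l : List (Fin n → ℝ)) : (Fin n → ℝ) → ℝ :=
  fun t => l.foldr (fun a r => lin n a t ⊔ r) 0

noncomputable def suplX (n : ℕ) (l : List (Fin n → ℝ)) (x : Fin n → X) : X :=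
  l.foldr (fun a r => linX n a x ⊔ r) 0

lemma supl_nil (n : ℕ) : supl n [] = 0 := rfl

lemma supl_cons (n : ℕ) (a : Fin n → ℝ) (l : List (Fin n → ℝ)) :
    supl n (a :: l) = (lin n a) ⊔ (supl n l) := rfl

lemma hom1_supl (n : ℕ) (l : List (Fin n → ℝ)) : Hom1 n (supl n l) := by
  induction l with
  | nil => exact hom1_zero n
  | cons a l ih => rw [supl_cons]; exact hom1_sup (hom1_lin n a) ih

lemma tau_supl (H : TauCalc τ) (n : ℕ) (x : Fin n → X) (l : List (Fin n → ℝ)) :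
    τ n x (supl n l) = suplX n l x := by
  induction l with
  | nil => exact tau_zero H n x
  | cons a l ih =>
    rw [supl_cons, H.sup n x _ _ (hom1_lin n a) (hom1_supl n l), tau_lin H n x a, ih]
    rfl

lemma supl_nonneg (n : ℕ) (l : List (Fin n → ℝ)) (t : Fin n → ℝ) : 0 ≤ supl n l t := by
  induction l with
  | nil => exact le_rfl
  | cons a l ih => exact ih.trans le_sup_right

lemma supl_homog (n : ℕ) (l : List (Fin n → ℝ)) {c : ℝ} (hc : 0 ≤ c) (t : Fin n → ℝ) :
    supl n l (c • t) = c * supl n l t := by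
  induction l with
  | nil => simp [supl_nil]
  | cons a l ih =>
    rw [supl_cons, Pi.sup_apply, Pi.sup_apply, (hom1_lin n a).2 c hc t, ih,
      mul_max_of_nonneg _ _ hc]

lemma lin_le_supl (n : ℕ) {a : Fin n → ℝ} {l : List (Fin n → ℝ)} (ha : a ∈ l)
    (t : Fin n → ℝ) : lin n a t ≤ supl n l t := by
  induction l with
  | nil => exact absurd ha List.not_mem_nil
  | cons b l ih =>
    rw [supl_cons, Pi.sup_apply]
    rcases List.mem_cons.1 ha with rfl | h
    · exact le_sup_left
    · exact (ih h).trans le_sup_right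

end TauAux
section HYAux
variable {X : Type*} [NormedAddCommGroup X] [Lattice X] [HasSolidNorm X] [IsOrderedAddMonoid X] [NormedSpace ℝ X]
variable (Y : BanachSeqLattice)

lemma nrm_zero : Y.nrm 0 = 0 := by simpa using Y.nrm_smul 0 0

lemma finSeq_add (n : ℕ) (s t : Fin n → ℝ) :
    finSeq n (s + t) = finSeq n s + finSeq n t := by
  funext k; simp only [finSeq, Pi.add_apply]; split <;> simp

lemma finSeq_smul (n : ℕ) (c : ℝ) (t : Fin n → ℝ) :
    finSeq n (c • t) = c • finSeq n t := by
  funext k; simp only [finSeq, Pi.smul_apply, smul_eq_mul]; split <;> simp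

lemma finSeq_zero (n : ℕ) : finSeq n (0 : Fin n → ℝ) = 0 := by
  funext k; simp only [finSeq, Pi.zero_apply]; split <;> simp

lemma finSeq_sum (n : ℕ) (t : Fin n → ℝ) :
    finSeq n t = ∑ j : Fin n, t j • unitf (j : ℕ) := by
  funext k
  rw [Finset.sum_apply]
  by_cases hk : k < n
  · rw [Finset.sum_eq_single (⟨k, hk⟩ : Fin n)]
    · simp [finSeq, unitf, hk]
    · intro j _ hj
      have hne : k ≠ (j : ℕ) := fun h => hj (by ext; simp [h.symm])
      simp [unitf, hne]
    · intro h; exact absurd (Finset.mem_univ _) h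
  · rw [Finset.sum_eq_zero]
    · simp [finSeq, hk]
    · intro j _
      have hne : k ≠ (j : ℕ) := fun h => hk (h ▸ j.isLt)
      simp [unitf, hne]

lemma mem_sum_unitf (n : ℕ) (t : Fin n → ℝ) (s : Finset (Fin n)) :
    Y.Mem (∑ j ∈ s, t j • unitf (j : ℕ)) :=
  Finset.sum_induction _ Y.Mem (fun f g hf hg => Y.add_mem hf hg) Y.zero_mem
    (fun j _ => Y.smul_mem (t j) (Y.unit_mem (j : ℕ)))

lemma finSeq_mem (n : ℕ) (t : Fin n → ℝ) : Y.Mem (finSeq n t) := by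
  rw [finSeq_sum]
  exact mem_sum_unitf Y n t Finset.univ

lemma nrm_sum_le (n : ℕ) (t : Fin n → ℝ) (s : Finset (Fin n)) :
    Y.nrm (∑ j ∈ s, t j • unitf (j : ℕ)) ≤ ∑ j ∈ s, |t j| * Y.nrm (unitf (j : ℕ)) := by
  classical
  induction s using Finset.induction with
  | empty => simp [nrm_zero]
  | @insert j s hj ih =>
    rw [Finset.sum_insert hj, Finset.sum_insert hj]
    refine le_trans (Y.nrm_add_le (Y.smul_mem _ (Y.unit_mem _)) (mem_sum_unitf Y n t s)) ?_
    rw [Y.nrm_smul]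
    exact add_le_add le_rfl ih

lemma hY_nonneg (n : ℕ) (t : Fin n → ℝ) : 0 ≤ hY Y n t := Y.nrm_nonneg _

lemma hY_add_le (n : ℕ) (s t : Fin n → ℝ) : hY Y n (s + t) ≤ hY Y n s + hY Y n t := by
  unfold hY; rw [finSeq_add]
  exact Y.nrm_add_le (finSeq_mem Y n s) (finSeq_mem Y n t)

lemma hY_homog_abs (n : ℕ) (c : ℝ) (t : Fin n → ℝ) : hY Y n (c • t) = |c| * hY Y n t := by
  unfold hY; rw [finSeq_smul, Y.nrm_smul]

lemma hY_homog (n : ℕ) {c : ℝ} (hc : 0 ≤ c) (t : Fin n → ℝ) :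
    hY Y n (c • t) = c * hY Y n t := by
  rw [hY_homog_abs, abs_of_nonneg hc]

lemma hY_zero (n : ℕ) : hY Y n 0 = 0 := by
  unfold hY; rw [finSeq_zero]; exact nrm_zero Y

lemma hY_mono (n : ℕ) {s t : Fin n → ℝ} (h : ∀ j, |s j| ≤ |t j|) : hY Y n s ≤ hY Y n t := by
  refine Y.nrm_mono (finSeq_mem Y n t) ?_
  intro k
  by_cases hk : k < n
  · simpa [finSeq, hk] using h ⟨k, hk⟩
  · simp [finSeq, hk]

lemma hY_le_sum (n : ℕ) (t : Fin n → ℝ) :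
    hY Y n t ≤ ∑ j : Fin n, |t j| * Y.nrm (unitf (j : ℕ)) := by
  unfold hY; rw [finSeq_sum]
  exact nrm_sum_le Y n t Finset.univ

lemma hY_lip (n : ℕ) (s t : Fin n → ℝ) :
    |hY Y n s - hY Y n t| ≤ ∑ j : Fin n, |s j - t j| * Y.nrm (unitf (j : ℕ)) := by
  have key : ∀ u v : Fin n → ℝ,
      hY Y n u - hY Y n v ≤ ∑ j : Fin n, |u j - v j| * Y.nrm (unitf (j : ℕ)) := by
    intro u v
    have h1 : hY Y n u ≤ hY Y n (u - v) + hY Y n v := by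
      have := hY_add_le Y n (u - v) v
      rwa [sub_add_cancel] at this
    have h2 : hY Y n (u - v) ≤ ∑ j : Fin n, |u j - v j| * Y.nrm (unitf (j : ℕ)) := by
      simpa using hY_le_sum Y n (u - v)
    linarith
  rw [abs_sub_le_iff]
  refine ⟨key s t, ?_⟩
  have := key t s
  refine le_trans this (le_of_eq ?_)
  exact Finset.sum_congr rfl fun j _ => by rw [abs_sub_comm]

lemma hY_cont (n : ℕ) : Continuous (hY Y n) := by
  refine (LipschitzWith.of_dist_le_mul
    (K := (∑ j : Fin n, Y.nrm (unitf (j : ℕ))).toNNReal) ?_).continuous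
  intro s t
  rw [Real.dist_eq]
  refine le_trans (hY_lip Y n s t) ?_
  rw [Real.coe_toNNReal _ (Finset.sum_nonneg fun j _ => Y.nrm_nonneg _), Finset.sum_mul]
  refine Finset.sum_le_sum fun j _ => ?_
  rw [mul_comm (Y.nrm (unitf (j:ℕ))) (dist s t)]
  refine mul_le_mul_of_nonneg_right ?_ (Y.nrm_nonneg _)
  calc |s j - t j| = dist (s j) (t j) := (Real.dist_eq _ _).symm
    _ ≤ dist s t := dist_le_pi_dist s t j

lemma hom1_hY (n : ℕ) : Hom1 n (hY Y n) :=
  ⟨hY_cont Y n, fun c hc t => hY_homog Y n hc t⟩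

/-- Support functionals of `hY` via Hahn–Banach. -/
lemma hY_support (n : ℕ) (s : Fin n → ℝ) :
    ∃ a : Fin n → ℝ, (∀ t, lin n a t ≤ hY Y n t) ∧ hY Y n s ≤ lin n a s := by
  by_cases hs : s = 0
  · refine ⟨0, fun t => ?_, ?_⟩
    · simpa [lin] using hY_nonneg Y n t
    · simp [lin, hs, hY_zero Y n]
  · have hdom : ∀ u : (LinearPMap.mkSpanSingleton (K := ℝ) (L := ℝ) (σ := RingHom.id ℝ) s (hY Y n s) hs).domain,
        (LinearPMap.mkSpanSingleton (K := ℝ) (L := ℝ) (σ := RingHom.id ℝ) s (hY Y n s) hs) u ≤ hY Y n u := by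
      rintro ⟨u, hu⟩
      obtain ⟨c, hc⟩ := Submodule.mem_span_singleton.1 hu
      subst hc
      rw [LinearPMap.mkSpanSingleton'_apply s (hY Y n s) _ c hu, RingHom.id_apply, smul_eq_mul]
      calc c * hY Y n s ≤ |c| * hY Y n s :=
            mul_le_mul_of_nonneg_right (le_abs_self c) (hY_nonneg Y n s)
        _ = hY Y n (c • s) := (hY_homog_abs Y n c s).symm
    obtain ⟨g, hg1, hg2⟩ := exists_extension_of_le_sublinear
      (LinearPMap.mkSpanSingleton (K := ℝ) (L := ℝ) (σ := RingHom.id ℝ) s (hY Y n s) hs) (hY Y n)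
      (fun c hc t => hY_homog Y n hc.le t) (hY_add_le Y n) hdom
    have hgs : g s = hY Y n s := by
      have h5 := hg1 ⟨s, Submodule.mem_span_singleton_self s⟩
      rw [LinearPMap.mkSpanSingleton_apply ℝ ℝ hs (hY Y n s)] at h5
      exact h5
    refine ⟨fun j => g fun k => if j = k then 1 else 0, fun t => ?_, ?_⟩
    · have := LinearMap.pi_apply_eq_sum_univ g t
      have hlin : lin n (fun j => g fun k => if j = k then 1 else 0) t = g t := by
        rw [this, lin]
        exact Finset.sum_congr rfl fun j _ => by rw [smul_eq_mul, mul_comm]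
      rw [hlin]; exact hg2 t
    · have := LinearMap.pi_apply_eq_sum_univ g s
      have hlin : lin n (fun j => g fun k => if j = k then 1 else 0) s = g s := by
        rw [this, lin]
        exact Finset.sum_congr rfl fun j _ => by rw [smul_eq_mul, mul_comm]
      rw [hlin, hgs]

/-- The key approximation lemma: `hY` is uniformly approximated from below by finite
suprema of dominated linear functionals. -/
lemma hY_approx (n : ℕ) {ε : ℝ} (hε : 0 < ε) :
    ∃ l : List (Fin n → ℝ), (∀ a ∈ l, ∀ t, lin n a t ≤ hY Y n t) ∧
      ∀ t, hY Y n t ≤ supl n l t + ε * ∑ j : Fin n, |t j| := by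
  classical
  choose A hA1 hA2 using hY_support Y n
  set K := Metric.closedBall (0 : Fin n → ℝ) 1 with hK_def
  have hKc : IsCompact K := isCompact_closedBall 0 1
  set U : (Fin n → ℝ) → Set (Fin n → ℝ) := fun s => {t | hY Y n t - lin n (A s) t < ε}
    with hU_def
  have hUopen : ∀ s, IsOpen (U s) := fun s =>
    isOpen_lt (Continuous.sub (hY_cont Y n) (hom1_lin n (A s)).1) continuous_const
  have hUcov : K ⊆ ⋃ s, U s := by
    intro t _
    exact Set.mem_iUnion.2 ⟨t, by
      simp only [U, Set.mem_setOf_eq]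
      have := hA2 t
      linarith⟩
  obtain ⟨S, hS⟩ := hKc.elim_finite_subcover U hUopen hUcov
  refine ⟨S.toList.map A, ?_, ?_⟩
  · intro a ha
    obtain ⟨s, _, rfl⟩ := List.mem_map.1 ha
    exact hA1 s
  · have hball : ∀ t ∈ K, hY Y n t ≤ supl n (S.toList.map A) t + ε := by
      intro t ht
      obtain ⟨s, hsS, hts⟩ := Set.mem_iUnion₂.1 (hS ht)
      have h1 : hY Y n t - lin n (A s) t < ε := hts
      have h2 : lin n (A s) t ≤ supl n (S.toList.map A) t :=
        lin_le_supl n (List.mem_map.2 ⟨s, Finset.mem_toList.2 hsS, rfl⟩) t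
      linarith
    intro t
    by_cases ht : t = 0
    · subst ht
      have h0 := supl_nonneg n (S.toList.map A) 0
      have h1 : (0:ℝ) ≤ ε * ∑ j : Fin n, |(0 : Fin n → ℝ) j| := by positivity
      rw [hY_zero Y n]
      linarith
    · set c := ‖t‖ with hc_def
      have hc : 0 < c := norm_pos_iff.2 ht
      set t' := c⁻¹ • t with ht'_def
      have ht'K : t' ∈ K := by
        rw [hK_def, mem_closedBall_zero_iff, ht'_def, norm_smul, norm_inv, norm_norm]
        rw [← hc_def, inv_mul_cancel₀ hc.ne']
      have hkey := hball t' ht'K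
      have hct' : c • t' = t := by
        rw [ht'_def, smul_smul, mul_inv_cancel₀ hc.ne', one_smul]
      have e1 : hY Y n t = c * hY Y n t' := by
        rw [← hct', hY_homog Y n hc.le]
      have e2 : supl n (S.toList.map A) t = c * supl n (S.toList.map A) t' := by
        rw [← hct', supl_homog n _ hc.le]
      have e3 : c ≤ ∑ j : Fin n, |t j| := by
        have h4 : ∀ j, ‖t j‖ ≤ ∑ j : Fin n, |t j| := by
          intro j
          rw [Real.norm_eq_abs]
          exact Finset.single_le_sum (f := fun j => |t j|)
            (fun i _ => abs_nonneg _) (Finset.mem_univ j)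
        calc c = ‖t‖ := rfl
          _ ≤ ∑ j : Fin n, |t j| := by
            refine pi_norm_le_iff_of_nonneg ?_ |>.2 h4
            exact Finset.sum_nonneg fun j _ => abs_nonneg _
      calc hY Y n t = c * hY Y n t' := e1
        _ ≤ c * (supl n (S.toList.map A) t' + ε) :=
            mul_le_mul_of_nonneg_left hkey hc.le
        _ = c * supl n (S.toList.map A) t' + ε * c := by ring
        _ ≤ supl n (S.toList.map A) t + ε * ∑ j : Fin n, |t j| := by
            rw [e2]
            exact add_le_add le_rfl (mul_le_mul_of_nonneg_left e3 hε.le)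


end HYAux
section VYAux
variable {X : Type*} [NormedAddCommGroup X] [Lattice X] [HasSolidNorm X] [IsOrderedAddMonoid X] [NormedSpace ℝ X]
variable (Y : BanachSeqLattice)
variable {τ : ∀ n : ℕ, (Fin n → X) → ((Fin n → ℝ) → ℝ) → X}

lemma coreUB (H : TauCalc τ) (n : ℕ) (x : Fin n → X) {ε : ℝ} (hε : 0 < ε) :
    ∃ l : List (Fin n → ℝ), (∀ a ∈ l, ∀ t, lin n a t ≤ hY Y n t) ∧
      vY Y τ n x ≤ suplX n l x + ε • asumX n (fun _ => 1) x := by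
  obtain ⟨l, hl1, hl2⟩ := hY_approx Y n hε
  refine ⟨l, hl1, ?_⟩
  have hpt : ∀ t, hY Y n t ≤ (supl n l + ε • asum n (fun _ => 1)) t := by
    intro t
    have ha : asum n (fun _ => (1:ℝ)) t = ∑ j : Fin n, |t j| := by
      unfold asum; exact Finset.sum_congr rfl fun j _ => by rw [one_mul]
    simp only [Pi.add_apply, Pi.smul_apply, smul_eq_mul, ha]
    exact hl2 t
  have h1 : τ n x (hY Y n) ≤ τ n x (supl n l + ε • asum n (fun _ => 1)) :=
    tau_mono H x (hom1_hY Y n) (hom1_add (hom1_supl n l) (hom1_smul ε (hom1_asum n _))) hpt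
  rw [vY_def]
  refine h1.trans (le_of_eq ?_)
  rw [H.add n x _ _ (hom1_supl n l) (hom1_smul ε (hom1_asum n _)),
    H.smul n x ε _ (hom1_asum n _), tau_supl H n x l, tau_asum H n x _]

lemma coreLB (H : TauCalc τ) (n : ℕ) (x : Fin n → X) {a : Fin n → ℝ}
    (ha : ∀ t, lin n a t ≤ hY Y n t) : asumX n a x ≤ vY Y τ n x := by
  have hpt : ∀ t, asum n a t ≤ hY Y n t := by
    intro t
    have h1 : asum n a t = lin n a (fun j => if 0 ≤ a j then |t j| else -|t j|) := by
      unfold asum lin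
      refine Finset.sum_congr rfl fun j _ => ?_
      show |a j * t j| = a j * (if 0 ≤ a j then |t j| else -|t j|)
      by_cases haj : 0 ≤ a j
      · rw [if_pos haj, abs_mul, abs_of_nonneg haj]
      · rw [if_neg haj, abs_mul, abs_of_neg (lt_of_not_ge haj)]
        ring
    have h3 : hY Y n (fun j => if 0 ≤ a j then |t j| else -|t j|) ≤ hY Y n t := by
      refine hY_mono Y n fun j => ?_
      show |(if 0 ≤ a j then |t j| else -|t j|)| ≤ |t j|
      by_cases haj : 0 ≤ a j
      · rw [if_pos haj, abs_abs]
      · rw [if_neg haj, abs_neg, abs_abs]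
    calc asum n a t = lin n a (fun j => if 0 ≤ a j then |t j| else -|t j|) := h1
      _ ≤ hY Y n (fun j => if 0 ≤ a j then |t j| else -|t j|) := ha _
      _ ≤ hY Y n t := h3
  rw [← tau_asum H n x a, vY_def]
  exact tau_mono H x (hom1_asum n a) (hom1_hY Y n) hpt

lemma vY_nonneg (H : TauCalc τ) (n : ℕ) (x : Fin n → X) : 0 ≤ vY Y τ n x := by
  rw [vY_def]
  exact tau_nonneg H x (hom1_hY Y n) (hY_nonneg Y n)

lemma linX_le_asumX (n : ℕ) (a : Fin n → ℝ) (x : Fin n → X) : linX n a x ≤ asumX n a x :=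
  Finset.sum_le_sum fun j _ => le_abs_self _

lemma vY_mono (H : TauCalc τ) (n : ℕ) {x z : Fin n → X} (hxz : ∀ j, |x j| ≤ |z j|) :
    vY Y τ n x ≤ vY Y τ n z := by
  refine aux_le_of_forall_eps (w := asumX n (fun _ => 1) x) fun ε hε => ?_
  obtain ⟨l, hl1, hl2⟩ := coreUB Y H n x hε
  refine hl2.trans (add_le_add_left ?_ _)
  have key : ∀ l' : List (Fin n → ℝ), (∀ a ∈ l', ∀ t, lin n a t ≤ hY Y n t) →
      suplX n l' x ≤ vY Y τ n z := by
    intro l'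
    induction l' with
    | nil => intro _; exact vY_nonneg Y H n z
    | cons a l' ih =>
      intro hcond
      rw [show suplX n (a :: l') x = linX n a x ⊔ suplX n l' x from rfl]
      refine sup_le ?_ (ih fun b hb => hcond b (List.mem_cons_of_mem a hb))
      have h2 : asumX n a x ≤ asumX n a z := by
        refine Finset.sum_le_sum fun j _ => ?_
        rw [aux_abs_smul, aux_abs_smul]
        exact aux_smul_le_smul (abs_nonneg (a j)) (hxz j)
      exact ((linX_le_asumX n a x).trans h2).trans
        (coreLB Y H n z fun t => hcond a List.mem_cons_self t)
  exact key l hl1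

lemma vY_congr_abs (H : TauCalc τ) (n : ℕ) {x z : Fin n → X}
    (hxz : ∀ j, |x j| = |z j|) : vY Y τ n x = vY Y τ n z :=
  le_antisymm (vY_mono Y H n fun j => (hxz j).le) (vY_mono Y H n fun j => (hxz j).ge)

lemma vY_subadd (H : TauCalc τ) (n : ℕ) (x y : Fin n → X) :
    vY Y τ n (x + y) ≤ vY Y τ n x + vY Y τ n y := by
  refine aux_le_of_forall_eps (w := asumX n (fun _ => 1) (x + y)) fun ε hε => ?_
  obtain ⟨l, hl1, hl2⟩ := coreUB Y H n (x + y) hε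
  refine hl2.trans (add_le_add_left ?_ _)
  have key : ∀ l' : List (Fin n → ℝ), (∀ a ∈ l', ∀ t, lin n a t ≤ hY Y n t) →
      suplX n l' (x + y) ≤ vY Y τ n x + vY Y τ n y := by
    intro l'
    induction l' with
    | nil => intro _; exact add_nonneg (vY_nonneg Y H n x) (vY_nonneg Y H n y)
    | cons a l' ih =>
      intro hcond
      rw [show suplX n (a :: l') (x + y) = linX n a (x + y) ⊔ suplX n l' (x + y) from rfl]
      refine sup_le ?_ (ih fun b hb => hcond b (List.mem_cons_of_mem a hb))
      have he : linX n a (x + y) = linX n a x + linX n a y := by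
        unfold linX
        rw [← Finset.sum_add_distrib]
        exact Finset.sum_congr rfl fun j _ => by rw [Pi.add_apply, smul_add]
      rw [he]
      have hax := (linX_le_asumX n a x).trans
        (coreLB Y H n x fun t => hcond a List.mem_cons_self t)
      have hay := (linX_le_asumX n a y).trans
        (coreLB Y H n y fun t => hcond a List.mem_cons_self t)
      exact add_le_add hax hay
  exact key l hl1

lemma vY_le_asumX_cs (H : TauCalc τ) (n : ℕ) (x : Fin n → X) :
    vY Y τ n x ≤ asumX n (fun j => Y.nrm (unitf (j:ℕ))) x := by
  rw [vY_def, ← tau_asum H n x _]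
  refine tau_mono H x (hom1_hY Y n) (hom1_asum n _) fun t => ?_
  refine (hY_le_sum Y n t).trans (le_of_eq ?_)
  unfold asum
  refine Finset.sum_congr rfl fun j _ => ?_
  rw [abs_mul, abs_of_nonneg (Y.nrm_nonneg _), mul_comm]

lemma vY_coord (H : TauCalc τ) (n : ℕ) (x : Fin n → X) (j : Fin n) :
    |Y.nrm (unitf (j:ℕ)) • x j| ≤ vY Y τ n x := by
  set a : Fin n → ℝ := Pi.single j (Y.nrm (unitf (j:ℕ))) with ha_def
  have hlin : ∀ t, lin n a t ≤ hY Y n t := by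
    intro t
    have h1 : lin n a t = Y.nrm (unitf (j:ℕ)) * t j := by
      unfold lin
      rw [Finset.sum_eq_single j]
      · rw [ha_def, Pi.single_eq_same]
      · intro i _ hij; rw [ha_def, Pi.single_eq_of_ne hij]; ring
      · intro h; exact absurd (Finset.mem_univ _) h
    rw [h1]
    have h2 : Y.nrm (unitf (j:ℕ)) * t j ≤ Y.nrm (t j • unitf (j:ℕ)) := by
      rw [Y.nrm_smul, mul_comm]
      exact mul_le_mul_of_nonneg_right (le_abs_self _) (Y.nrm_nonneg _)
    have h3 : Y.nrm (t j • unitf (j:ℕ)) ≤ hY Y n t := by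
      refine Y.nrm_mono (finSeq_mem Y n t) fun k => ?_
      by_cases hk : k = (j:ℕ)
      · subst hk
        simp [unitf, finSeq, j.isLt]
      · simp [unitf, hk, abs_nonneg]
    exact h2.trans h3
  have h4 := coreLB Y H n x hlin
  refine le_trans ?_ h4
  have h5 : |Y.nrm (unitf (j:ℕ)) • x j| = |a j • x j| := by
    rw [ha_def, Pi.single_eq_same]
  rw [h5]
  exact Finset.single_le_sum (f := fun i => |a i • x i|)
    (fun i _ => abs_nonneg _) (Finset.mem_univ j)

lemma vY_norm_mono (H : TauCalc τ) (n : ℕ) {x z : Fin n → X}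
    (hxz : ∀ j, |x j| ≤ |z j|) : ‖vY Y τ n x‖ ≤ ‖vY Y τ n z‖ := by
  refine norm_le_norm_of_abs_le_abs ?_
  rw [abs_of_nonneg (vY_nonneg Y H n x), abs_of_nonneg (vY_nonneg Y H n z)]
  exact vY_mono Y H n hxz

lemma vY_norm_subadd (H : TauCalc τ) (n : ℕ) (x y : Fin n → X) :
    ‖vY Y τ n (x + y)‖ ≤ ‖vY Y τ n x‖ + ‖vY Y τ n y‖ := by
  have h1 : ‖vY Y τ n (x + y)‖ ≤ ‖vY Y τ n x + vY Y τ n y‖ := by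
    refine norm_le_norm_of_abs_le_abs ?_
    rw [abs_of_nonneg (vY_nonneg Y H n (x+y)),
      abs_of_nonneg (add_nonneg (vY_nonneg Y H n x) (vY_nonneg Y H n y))]
    exact vY_subadd Y H n x y
  exact h1.trans (norm_add_le _ _)

lemma vY_norm_diff (H : TauCalc τ) (n : ℕ) (w w' : Fin n → X) :
    ‖vY Y τ n w - vY Y τ n w'‖ ≤ ‖vY Y τ n (w - w')‖ := by
  have h1 : vY Y τ n w - vY Y τ n w' ≤ vY Y τ n (w - w') := by
    have h := vY_subadd Y H n w' (w - w')
    rw [show w' + (w - w') = w by abel] at h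
    exact sub_le_iff_le_add'.2 h
  have h2 : -(vY Y τ n w - vY Y τ n w') ≤ vY Y τ n (w - w') := by
    have h := vY_subadd Y H n w (w' - w)
    rw [show w + (w' - w) = w' by abel] at h
    have h3 : vY Y τ n (w' - w) = vY Y τ n (w - w') :=
      vY_congr_abs Y H n fun j => by rw [Pi.sub_apply, Pi.sub_apply, abs_sub_comm]
    rw [h3] at h
    rw [neg_sub]
    exact sub_le_iff_le_add'.2 h
  refine norm_le_norm_of_abs_le_abs ?_
  rw [abs_of_nonneg (vY_nonneg Y H n (w - w'))]
  exact abs_le'.2 ⟨h1, h2⟩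

lemma vY_norm_le_sum (H : TauCalc τ) (n : ℕ) (x : Fin n → X) :
    ‖vY Y τ n x‖ ≤ ∑ j : Fin n, Y.nrm (unitf (j:ℕ)) * ‖x j‖ := by
  have h0 : 0 ≤ asumX n (fun j => Y.nrm (unitf (j:ℕ))) x :=
    Finset.sum_nonneg fun j _ => abs_nonneg _
  have h1 : ‖vY Y τ n x‖ ≤ ‖asumX n (fun j => Y.nrm (unitf (j:ℕ))) x‖ := by
    refine norm_le_norm_of_abs_le_abs ?_
    rw [abs_of_nonneg (vY_nonneg Y H n x), abs_of_nonneg h0]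
    exact vY_le_asumX_cs Y H n x
  refine h1.trans ((norm_sum_le _ _).trans ?_)
  refine Finset.sum_le_sum fun j _ => le_of_eq ?_
  rw [norm_abs_eq_norm, norm_smul, Real.norm_eq_abs, abs_of_nonneg (Y.nrm_nonneg _)]

lemma vY_norm_coord (H : TauCalc τ) (n : ℕ) (x : Fin n → X) (j : Fin n) :
    Y.nrm (unitf (j:ℕ)) * ‖x j‖ ≤ ‖vY Y τ n x‖ := by
  have h2 : ‖|Y.nrm (unitf (j:ℕ)) • x j|‖ ≤ ‖vY Y τ n x‖ := by
    refine norm_le_norm_of_abs_le_abs ?_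
    rw [abs_abs, abs_of_nonneg (vY_nonneg Y H n x)]
    exact vY_coord Y H n x j
  rw [norm_abs_eq_norm, norm_smul, Real.norm_eq_abs, abs_of_nonneg (Y.nrm_nonneg _)] at h2
  exact h2

end VYAux
section TnrmAux
variable {X : Type*} [NormedAddCommGroup X] [Lattice X] [HasSolidNorm X] [IsOrderedAddMonoid X] [NormedSpace ℝ X]
variable (Y : BanachSeqLattice)
variable {τ : ∀ n : ℕ, (Fin n → X) → ((Fin n → ℝ) → ℝ) → X}

/-- Restriction of a sequence to its first `n` entries. -/
def res (x : ℕ → X) (n : ℕ) : Fin n → X := fun j => x (j : ℕ)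

lemma tnrm_nonneg (x : ℕ → X) : 0 ≤ Tnrm Y τ x :=
  Real.iSup_nonneg fun _ => norm_nonneg _

lemma le_tnrm {x : ℕ → X} (hx : Tmem Y τ x) (n : ℕ) :
    ‖vY Y τ n (res x n)‖ ≤ Tnrm Y τ x := le_ciSup hx n

lemma tnrm_le {x : ℕ → X} {B : ℝ} (h : ∀ n, ‖vY Y τ n (res x n)‖ ≤ B) :
    Tnrm Y τ x ≤ B := ciSup_le h

lemma tmem_of_bound {x : ℕ → X} {B : ℝ} (h : ∀ n, ‖vY Y τ n (res x n)‖ ≤ B) :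
    Tmem Y τ x := ⟨B, by rintro r ⟨n, rfl⟩; exact h n⟩

lemma tmem_add (H : TauCalc τ) {x y : ℕ → X} (hx : Tmem Y τ x) (hy : Tmem Y τ y) :
    Tmem Y τ (x + y) :=
  tmem_of_bound Y fun n => by
    have h1 := vY_norm_subadd Y H n (res x n) (res y n)
    rw [show res x n + res y n = res (x + y) n from rfl] at h1
    exact h1.trans (add_le_add (le_tnrm Y hx n) (le_tnrm Y hy n))

lemma tnrm_add_le (H : TauCalc τ) {x y : ℕ → X} (hx : Tmem Y τ x) (hy : Tmem Y τ y) :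
    Tnrm Y τ (x + y) ≤ Tnrm Y τ x + Tnrm Y τ y :=
  tnrm_le Y fun n => by
    have h1 := vY_norm_subadd Y H n (res x n) (res y n)
    rw [show res x n + res y n = res (x + y) n from rfl] at h1
    exact h1.trans (add_le_add (le_tnrm Y hx n) (le_tnrm Y hy n))

lemma tmem_mono (H : TauCalc τ) {x z : ℕ → X} (h : ∀ j, |x j| ≤ |z j|)
    (hz : Tmem Y τ z) : Tmem Y τ x :=
  tmem_of_bound Y fun n =>
    (vY_norm_mono Y H n (x := res x n) (z := res z n) fun j => h (j : ℕ)).trans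
      (le_tnrm Y hz n)

lemma tnrm_mono (H : TauCalc τ) {x z : ℕ → X} (h : ∀ j, |x j| ≤ |z j|)
    (hz : Tmem Y τ z) : Tnrm Y τ x ≤ Tnrm Y τ z :=
  tnrm_le Y fun n =>
    (vY_norm_mono Y H n (x := res x n) (z := res z n) fun j => h (j : ℕ)).trans
      (le_tnrm Y hz n)

lemma tnrm_congr (H : TauCalc τ) {x z : ℕ → X} (h : ∀ j, |x j| = |z j|) :
    Tnrm Y τ x = Tnrm Y τ z := by
  unfold Tnrm
  congr 1
  funext n
  show ‖vY Y τ n (res x n)‖ = ‖vY Y τ n (res z n)‖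
  rw [vY_congr_abs Y H n (x := res x n) (z := res z n) fun j => h (j : ℕ)]

lemma tmem_neg (H : TauCalc τ) {x : ℕ → X} (hx : Tmem Y τ x) : Tmem Y τ (-x) :=
  tmem_mono Y H (fun j => by rw [Pi.neg_apply, abs_neg]) hx

lemma tmem_sub (H : TauCalc τ) {x y : ℕ → X} (hx : Tmem Y τ x) (hy : Tmem Y τ y) :
    Tmem Y τ (x - y) := by
  have h1 := tmem_add Y H hx (tmem_neg Y H hy)
  rwa [← sub_eq_add_neg] at h1

lemma tmem_finsupp (H : TauCalc τ) {v : ℕ → X} {N : ℕ} (hv : ∀ j, N ≤ j → v j = 0) :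
    Tmem Y τ v := by
  refine tmem_of_bound Y (B := ∑ j ∈ Finset.range N, Y.nrm (unitf j) * ‖v j‖) fun n => ?_
  refine (vY_norm_le_sum Y H n (res v n)).trans ?_
  have he : ∑ j : Fin n, Y.nrm (unitf (j : ℕ)) * ‖res v n j‖
      = ∑ j ∈ Finset.range n, Y.nrm (unitf j) * ‖v j‖ :=
    Fin.sum_univ_eq_sum_range (fun j => Y.nrm (unitf j) * ‖v j‖) n
  rw [he]
  rcases le_total n N with hnN | hNn
  · exact Finset.sum_le_sum_of_subset_of_nonneg (Finset.range_subset_range.2 hnN)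
      (fun j _ _ => mul_nonneg (Y.nrm_nonneg _) (norm_nonneg _))
  · refine le_of_eq (Finset.sum_subset (Finset.range_subset_range.2 hNn) ?_).symm
    intro j _ hjN
    rw [hv j (not_lt.1 fun h => hjN (Finset.mem_range.2 h)), norm_zero, mul_zero]

lemma tnrm_coord (H : TauCalc τ) {x : ℕ → X} (hx : Tmem Y τ x) (j : ℕ) :
    Y.nrm (unitf j) * ‖x j‖ ≤ Tnrm Y τ x := by
  have h1 := vY_norm_coord Y H (j+1) (res x (j+1)) ⟨j, Nat.lt_succ_self j⟩
  exact h1.trans (le_tnrm Y hx (j+1))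

lemma cs_pos (j : ℕ) : 0 < Y.nrm (unitf j) := by
  rcases lt_or_eq_of_le (Y.nrm_nonneg (unitf j)) with h | h
  · exact h
  · exfalso
    have h0 : unitf j = 0 := (Y.nrm_eq_zero_iff (Y.unit_mem j)).1 h.symm
    have h1 := congrFun h0 j
    simp [unitf] at h1

end TnrmAux
/-- `ℓ₀^{τ,Y}(X)`, the closure of the eventually zero sequences in `ℓ^{τ,Y}(X)`, is an
ideal (hence a closed sublattice) of `ℓ^{τ,Y}(X)`; in particular it is itself a Banach
lattice. -/
theorem stmt14 (Y : BanachSeqLattice) {X : Type*}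
    [NormedAddCommGroup X] [Lattice X] [HasSolidNorm X] [IsOrderedAddMonoid X] [NormedSpace ℝ X] [CompleteSpace X]
    (τ : ∀ n : ℕ, (Fin n → X) → ((Fin n → ℝ) → ℝ) → X)
    (hadd : ∀ (n : ℕ) (x : Fin n → X) (h₁ h₂ : (Fin n → ℝ) → ℝ), Hom1 n h₁ → Hom1 n h₂ →
      τ n x (h₁ + h₂) = τ n x h₁ + τ n x h₂)
    (hsmul : ∀ (n : ℕ) (x : Fin n → X) (c : ℝ) (h : (Fin n → ℝ) → ℝ), Hom1 n h →
      τ n x (c • h) = c • τ n x h)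
    (hsup : ∀ (n : ℕ) (x : Fin n → X) (h₁ h₂ : (Fin n → ℝ) → ℝ), Hom1 n h₁ → Hom1 n h₂ →
      τ n x (h₁ ⊔ h₂) = τ n x h₁ ⊔ τ n x h₂)
    (hproj : ∀ (n : ℕ) (x : Fin n → X) (j : Fin n), τ n x (fun t => t j) = x j) :
    -- `ℓ₀^{τ,Y}(X)` is an ideal of `ℓ^{τ,Y}(X)`:
    (∀ x z : ℕ → X, (∀ j, |x j| ≤ |z j|) → T0mem Y τ z → T0mem Y τ x) ∧
    -- in particular it is a sublattice:
    (∀ x z : ℕ → X, T0mem Y τ x → T0mem Y τ z → T0mem Y τ (fun j => x j ⊔ z j)) ∧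
    -- and, being closed, it is complete, hence a Banach lattice:
    (∀ u : ℕ → (ℕ → X), (∀ m, T0mem Y τ (u m)) →
      (∀ ε : ℝ, 0 < ε → ∃ N, ∀ m, N ≤ m → ∀ k, N ≤ k → Tnrm Y τ (u m - u k) < ε) →
      ∃ x, T0mem Y τ x ∧
        Filter.Tendsto (fun m => Tnrm Y τ (u m - x)) Filter.atTop (nhds 0)) := by
  have H : TauCalc τ := ⟨hadd, hsmul, hsup, hproj⟩
  -- Part 1: ideal property
  have part1 : ∀ x z : ℕ → X, (∀ j, |x j| ≤ |z j|) → T0mem Y τ z → T0mem Y τ x := by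
    intro x z hxz hz
    obtain ⟨hzmem, hzapp⟩ := hz
    refine ⟨tmem_mono Y H hxz hzmem, ?_⟩
    intro ε hε
    obtain ⟨v, ⟨N, hvN⟩, hvz⟩ := hzapp ε hε
    refine ⟨fun j => if j < N then x j else 0, ⟨N, fun j hj => if_neg (not_lt.2 hj)⟩, ?_⟩
    have hcoord : ∀ j, |(x - fun j => if j < N then x j else 0) j| ≤ |(z - v) j| := by
      intro j
      by_cases hj : j < N
      · rw [Pi.sub_apply]
        simp only [if_pos hj, sub_self, abs_zero]
        exact abs_nonneg _
      · rw [Pi.sub_apply, Pi.sub_apply, if_neg hj, sub_zero, hvN j (not_lt.1 hj), sub_zero]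
        exact hxz j
    have hmemzv : Tmem Y τ (z - v) := tmem_sub Y H hzmem (tmem_finsupp Y H hvN)
    calc Tnrm Y τ (x - fun j => if j < N then x j else 0)
        ≤ Tnrm Y τ (z - v) := tnrm_mono Y H hcoord hmemzv
      _ < ε := hvz
  refine ⟨part1, ?_, ?_⟩
  -- Part 2: sublattice
  · intro x z hx hz
    obtain ⟨hxm, hxa⟩ := hx
    obtain ⟨hzm, hza⟩ := hz
    have habs : ∀ j, |x j ⊔ z j| ≤ |(fun j => |x j| + |z j|) j| := by
      intro j
      rw [show |(fun j => |x j| + |z j|) j| = |x j| + |z j| from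
        abs_of_nonneg (add_nonneg (abs_nonneg _) (abs_nonneg _))]
      exact aux_abs_sup_le (x j) (z j)
    refine part1 _ _ habs ?_
    constructor
    · refine tmem_of_bound Y (B := Tnrm Y τ x + Tnrm Y τ z) fun n => ?_
      have h1 := vY_norm_subadd Y H n (res (fun j => |x j|) n) (res (fun j => |z j|) n)
      rw [show res (fun j => |x j|) n + res (fun j => |z j|) n
          = res (fun j => |x j| + |z j|) n from rfl] at h1
      refine h1.trans ?_
      rw [vY_congr_abs Y H n (x := res (fun j => |x j|) n) (z := res x n)
          (fun j => abs_abs _),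
        vY_congr_abs Y H n (x := res (fun j => |z j|) n) (z := res z n)
          (fun j => abs_abs _)]
      exact add_le_add (le_tnrm Y hxm n) (le_tnrm Y hzm n)
    · intro ε hε
      obtain ⟨vx, ⟨Nx, hvx⟩, hx3⟩ := hxa (ε/3) (by positivity)
      obtain ⟨vz, ⟨Nz, hvz⟩, hz3⟩ := hza (ε/3) (by positivity)
      refine ⟨fun j => |vx j| + |vz j|, ⟨max Nx Nz, fun j hj => ?_⟩, ?_⟩
      · show |vx j| + |vz j| = 0
        rw [hvx j (le_trans (le_max_left _ _) hj), hvz j (le_trans (le_max_right _ _) hj)]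
        simp
      · have hxvm : Tmem Y τ (x - vx) := tmem_sub Y H hxm (tmem_finsupp Y H hvx)
        have hzvm : Tmem Y τ (z - vz) := tmem_sub Y H hzm (tmem_finsupp Y H hvz)
        have hsb : ∀ n, ‖vY Y τ n (res (fun j => |x j - vx j| + |z j - vz j|) n)‖
            ≤ Tnrm Y τ (x - vx) + Tnrm Y τ (z - vz) := by
          intro n
          have h1 := vY_norm_subadd Y H n (res (fun j => |x j - vx j|) n)
            (res (fun j => |z j - vz j|) n)
          rw [show res (fun j => |x j - vx j|) n + res (fun j => |z j - vz j|) n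
              = res (fun j => |x j - vx j| + |z j - vz j|) n from rfl] at h1
          refine h1.trans ?_
          rw [vY_congr_abs Y H n (x := res (fun j => |x j - vx j|) n) (z := res (x - vx) n)
              (fun j => abs_abs _),
            vY_congr_abs Y H n (x := res (fun j => |z j - vz j|) n) (z := res (z - vz) n)
              (fun j => abs_abs _)]
          exact add_le_add (le_tnrm Y hxvm n) (le_tnrm Y hzvm n)
        have hsmem : Tmem Y τ (fun j => |x j - vx j| + |z j - vz j|) := tmem_of_bound Y hsb
        have hcoord : ∀ j, |((fun j => |x j| + |z j|) - fun j => |vx j| + |vz j|) j|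
            ≤ |(fun j => |x j - vx j| + |z j - vz j|) j| := by
          intro j
          rw [Pi.sub_apply,
            show ((fun j => |x j| + |z j|) j) - ((fun j => |vx j| + |vz j|) j)
              = (|x j| - |vx j|) + (|z j| - |vz j|) by show _ = _; exact add_sub_add_comm _ _ _ _,
            show |(fun j => |x j - vx j| + |z j - vz j|) j| = |x j - vx j| + |z j - vz j| from
              abs_of_nonneg (add_nonneg (abs_nonneg _) (abs_nonneg _))]
          refine (abs_add_le _ _).trans ?_
          exact add_le_add (abs_abs_sub_abs_le _ _) (abs_abs_sub_abs_le _ _)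
        calc Tnrm Y τ ((fun j => |x j| + |z j|) - fun j => |vx j| + |vz j|)
            ≤ Tnrm Y τ (fun j => |x j - vx j| + |z j - vz j|) :=
              tnrm_mono Y H hcoord hsmem
          _ ≤ Tnrm Y τ (x - vx) + Tnrm Y τ (z - vz) := tnrm_le Y hsb
          _ < ε := by linarith
  -- Part 3: completeness
  · intro u hu hc
    have humem : ∀ m, Tmem Y τ (u m) := fun m => (hu m).1
    have hdiffmem : ∀ m k, Tmem Y τ (u m - u k) :=
      fun m k => tmem_sub Y H (humem m) (humem k)
    have hcoord : ∀ j : ℕ, ∃ xj : X, Tendsto (fun m => u m j) atTop (nhds xj) := by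
      intro j
      have hcauchy : CauchySeq (fun m => u m j) := by
        rw [Metric.cauchySeq_iff]
        intro ε hε
        obtain ⟨N, hN⟩ := hc (ε * Y.nrm (unitf j)) (mul_pos hε (cs_pos Y j))
        refine ⟨N, fun m hm k hk => ?_⟩
        have h1 := tnrm_coord Y H (hdiffmem m k) j
        have h2 : Y.nrm (unitf j) * ‖(u m - u k) j‖ < ε * Y.nrm (unitf j) :=
          lt_of_le_of_lt h1 (hN m hm k hk)
        rw [mul_comm ε _] at h2
        have h3 := (mul_lt_mul_iff_right₀ (cs_pos Y j)).1 h2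
        rw [dist_eq_norm]
        exact h3
      exact cauchySeq_tendsto_of_complete hcauchy
    choose x hx using hcoord
    have key : ∀ ε : ℝ, 0 < ε → ∃ N, ∀ m, N ≤ m → ∀ n : ℕ,
        ‖vY Y τ n (res (u m - x) n)‖ ≤ ε := by
      intro ε hε
      obtain ⟨N, hN⟩ := hc ε hε
      refine ⟨N, fun m hm n => ?_⟩
      refine le_of_forall_pos_le_add fun δ hδ => ?_
      have htend : Tendsto
          (fun k => ∑ j : Fin n, Y.nrm (unitf (j:ℕ)) * ‖u k (j:ℕ) - x (j:ℕ)‖)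
          atTop (nhds 0) := by
        have hterm : ∀ j : Fin n, Tendsto
            (fun k => Y.nrm (unitf (j:ℕ)) * ‖u k (j:ℕ) - x (j:ℕ)‖) atTop (nhds 0) := by
          intro j
          have h1 : Tendsto (fun k => u k (j:ℕ) - x (j:ℕ)) atTop (nhds 0) := by
            simpa using (hx (j:ℕ)).sub_const (x (j:ℕ))
          have h2 := h1.norm
          rw [norm_zero] at h2
          simpa using h2.const_mul (Y.nrm (unitf (j:ℕ)))
        simpa using tendsto_finset_sum Finset.univ fun j _ => hterm j
      have hev := (htend.eventually_lt_const hδ).and (eventually_ge_atTop N)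
      obtain ⟨k, hk1, hk2⟩ := hev.exists
      have hd := vY_norm_diff Y H n (res (u m - x) n) (res (u m - u k) n)
      have he : res (u m - x) n - res (u m - u k) n = res (u k - x) n := by
        funext j
        simp only [Pi.sub_apply, res]
        abel
      rw [he] at hd
      have e1 : ‖vY Y τ n (res (u m - x) n)‖
          ≤ ‖vY Y τ n (res (u m - u k) n)‖ + ‖vY Y τ n (res (u k - x) n)‖ := by
        calc ‖vY Y τ n (res (u m - x) n)‖
            = ‖vY Y τ n (res (u m - u k) n)
                + (vY Y τ n (res (u m - x) n) - vY Y τ n (res (u m - u k) n))‖ := by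
              rw [show vY Y τ n (res (u m - u k) n)
                + (vY Y τ n (res (u m - x) n) - vY Y τ n (res (u m - u k) n))
                = vY Y τ n (res (u m - x) n) by abel]
          _ ≤ ‖vY Y τ n (res (u m - u k) n)‖
                + ‖vY Y τ n (res (u m - x) n) - vY Y τ n (res (u m - u k) n)‖ :=
              norm_add_le _ _
          _ ≤ _ := add_le_add le_rfl hd
      have e2 : ‖vY Y τ n (res (u m - u k) n)‖ ≤ Tnrm Y τ (u m - u k) :=
        le_tnrm Y (hdiffmem m k) n
      have e3 : ‖vY Y τ n (res (u k - x) n)‖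
          ≤ ∑ j : Fin n, Y.nrm (unitf (j:ℕ)) * ‖u k (j:ℕ) - x (j:ℕ)‖ := by
        have h4 := vY_norm_le_sum Y H n (res (u k - x) n)
        exact h4
      have e4 := hN m hm k hk2
      linarith
    obtain ⟨N0, hN0⟩ := key 1 one_pos
    have hmem0 : Tmem Y τ (u N0 - x) := tmem_of_bound Y (hN0 N0 le_rfl)
    have hxmem : Tmem Y τ x := by
      have h1 : Tmem Y τ (u N0 - (u N0 - x)) := tmem_sub Y H (humem N0) hmem0
      have h2 : u N0 - (u N0 - x) = x := by funext j; simp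
      rwa [h2] at h1
    have htail : ∀ ε : ℝ, 0 < ε → ∃ N, ∀ m, N ≤ m → Tnrm Y τ (u m - x) ≤ ε := by
      intro ε hε
      obtain ⟨N, hN⟩ := key ε hε
      exact ⟨N, fun m hm => tnrm_le Y (hN m hm)⟩
    have htendsto : Tendsto (fun m => Tnrm Y τ (u m - x)) atTop (nhds 0) := by
      rw [Metric.tendsto_atTop]
      intro ε hε
      obtain ⟨N, hN⟩ := htail (ε/2) (by positivity)
      refine ⟨N, fun m hm => ?_⟩
      rw [Real.dist_eq, sub_zero, abs_of_nonneg (tnrm_nonneg Y _)]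
      exact lt_of_le_of_lt (hN m hm) (by linarith)
    refine ⟨x, ⟨hxmem, ?_⟩, htendsto⟩
    intro ε hε
    obtain ⟨N, hN⟩ := htail (ε/3) (by positivity)
    obtain ⟨v, hv0, hv⟩ := (hu N).2 (ε/3) (by positivity)
    refine ⟨v, hv0, ?_⟩
    obtain ⟨Nv, hNv⟩ := hv0
    have hm1 : Tmem Y τ (x - u N) := tmem_sub Y H hxmem (humem N)
    have hm2 : Tmem Y τ (u N - v) := tmem_sub Y H (humem N) (tmem_finsupp Y H hNv)
    have heq : x - v = (x - u N) + (u N - v) := by abel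
    have h1 : Tnrm Y τ (x - u N) = Tnrm Y τ (u N - x) :=
      tnrm_congr Y H fun j => by rw [Pi.sub_apply, Pi.sub_apply, abs_sub_comm]
    have h2 := hN N le_rfl
    calc Tnrm Y τ (x - v) = Tnrm Y τ ((x - u N) + (u N - v)) := by rw [heq]
      _ ≤ Tnrm Y τ (x - u N) + Tnrm Y τ (u N - v) := tnrm_add_le Y H hm1 hm2
      _ < ε := by rw [h1]; linarith
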